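/- arXiv:1801.05774 — 6 statements merged into one kernel-verified Lean document; each statement's English description precedes it below -/
import Mathlib

section
/- For quaternions u₁, u₂ over the reals, u₁ * conj(u₂) * u₁ = 2⟪u₁, u₂⟫ • u₁ - ⟪u₁, u₁⟫ • u₂, where ⟪·,·⟫ denotes the standard inner product on the quaternions viewed as ℝ⁴ and conj denotes quaternion conjugation. -/
noncomputable def qinner (u v : Quaternion ℝ) : ℝ := (u * star v).re

theorem stmt0 (u₁ u₂ : Quaternion ℝ) :
    u₁ * star u₂ * u₁ = (2 * qinner u₁ u₂) • u₁ - (qinner u₁ u₁) • u₂ := by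
  ext <;> simp [qinner, Quaternion.re_mul, Quaternion.imI_mul, Quaternion.imJ_mul,
    Quaternion.imK_mul] <;> ring
end

section
/- For quaternions u₁, u₂, the squared norm of the anticommutator {u₁,u₂} = (u₁u₂+u₂u₁)/2 satisfies ⟪{u₁,u₂},{u₁,u₂}⟫ = ⟪u₁,u₁⟫⟪u₂,u₂⟫ - (⟪u₁',u₁'⟫⟪u₂',u₂'⟫ - ⟪u₁',u₂'⟫²), where u' = u - re(u)•1. -/
theorem stmt7 (u₁ u₂ : Quaternion ℝ) :
    qinner ((u₁ * u₂ + u₂ * u₁) / 2) ((u₁ * u₂ + u₂ * u₁) / 2) =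
      qinner u₁ u₁ * qinner u₂ u₂ -
        (qinner (u₁ - u₁.re • 1) (u₁ - u₁.re • 1) * qinner (u₂ - u₂.re • 1) (u₂ - u₂.re • 1)
          - (qinner (u₁ - u₁.re • 1) (u₂ - u₂.re • 1)) ^ 2) := by
  have h2 : ((2:ℝ):Quaternion ℝ) = 2 := by
    have := Quaternion.coe_natCast (R := ℝ) 2
    norm_num at this ⊢; exact this
  have h : (u₁ * u₂ + u₂ * u₁) / 2 = ((2:ℝ)⁻¹) • (u₁ * u₂ + u₂ * u₁) := by
    rw [div_eq_mul_inv, show ((2:Quaternion ℝ))⁻¹ = (((2:ℝ)⁻¹ : ℝ) : Quaternion ℝ) by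
      rw [Quaternion.coe_inv, h2], Quaternion.mul_coe_eq_smul]
  rw [h]
  simp only [qinner, Quaternion.re_mul, Quaternion.re_add, Quaternion.imI_add, Quaternion.imJ_add,
    Quaternion.imK_add, Quaternion.re_sub, Quaternion.imI_sub, Quaternion.imJ_sub,
    Quaternion.imK_sub, Quaternion.re_smul, Quaternion.imI_smul, Quaternion.imJ_smul,
    Quaternion.imK_smul, Quaternion.re_one, Quaternion.imI_one, Quaternion.imJ_one,
    Quaternion.imK_one, Quaternion.re_star, Quaternion.imI_star, Quaternion.imJ_star,
    Quaternion.imK_star, Quaternion.imI_mul, Quaternion.imJ_mul, Quaternion.imK_mul,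
    smul_eq_mul, mul_one, mul_zero]
  ring
end

section
/- For quaternions u₁, u₂, u₃, the triple commutator T(u₁,u₂,u₃) := ((u₁ * conj u₂) * u₃ - u₃ * (conj u₂ * u₁))/2 equals ⟪[u₁,u₂], u₃⟫ • 1 - re(u₁) • [u₂,u₃] + re(u₂) • [u₁,u₃] - re(u₃) • [u₁,u₂], where [a,b] = (ab - ba)/2 and re(u) = ⟪u,1⟫. -/
lemma qdiv2 (x : Quaternion ℝ) : x/2 = (2⁻¹:ℝ) • x := by
  have : ((2:ℝ) : Quaternion ℝ) = 2 := by
    rw [show (2:ℝ) = 1+1 by norm_num, Quaternion.coe_add, Quaternion.coe_one, one_add_one_eq_two]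
  rw [div_eq_mul_inv, ← this, ← Quaternion.coe_inv, Quaternion.mul_coe_eq_smul]

theorem stmt11 (u₁ u₂ u₃ : Quaternion ℝ) :
    ((u₁ * star u₂) * u₃ - u₃ * (star u₂ * u₁)) / 2 =
      (qinner ((u₁ * u₂ - u₂ * u₁) / 2) u₃) • (1 : Quaternion ℝ)
        - (qinner u₁ 1) • ((u₂ * u₃ - u₃ * u₂) / 2)
        + (qinner u₂ 1) • ((u₁ * u₃ - u₃ * u₁) / 2)
        - (qinner u₃ 1) • ((u₁ * u₂ - u₂ * u₁) / 2) := by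
  unfold qinner
  simp only [qdiv2]
  ext <;>
    simp [Quaternion.re_mul, Quaternion.imI_mul, Quaternion.imJ_mul, Quaternion.imK_mul,
      Quaternion.re_one, Quaternion.imI_one, Quaternion.imJ_one, Quaternion.imK_one] <;>
    ring
end

section
/- For quaternions u₁, u₂, u₃, the triple anticommutator A(u₁,u₂,u₃) = ⟪u₁,u₂⟫•u₃ - ⟪u₁,u₃⟫•u₂ + ⟪u₂,u₃⟫•u₁ and the triple commutator T(u₁,u₂,u₃) = ((u₁ * conj u₂)u₃ - u₃(conj u₂ * u₁))/2 are orthogonal: ⟪A(u₁,u₂,u₃), T(u₁,u₂,u₃)⟫ = 0. -/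
theorem stmt13 (u₁ u₂ u₃ : Quaternion ℝ) :
    qinner ((qinner u₁ u₂) • u₃ - (qinner u₁ u₃) • u₂ + (qinner u₂ u₃) • u₁)
           (((u₁ * star u₂) * u₃ - u₃ * (star u₂ * u₁)) / 2) = 0 := by
  have h : ∀ y : Quaternion ℝ, y / 2 = ((2:ℝ)⁻¹) • y := by
    intro y
    rw [div_eq_mul_inv, ← Quaternion.mul_coe_eq_smul]
    norm_num
    left
    norm_cast
  rw [h]
  simp only [qinner, Quaternion.re_mul, Quaternion.re_sub, Quaternion.re_add,
    Quaternion.re_smul, Quaternion.imI_sub, Quaternion.imI_add, Quaternion.imI_smul,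
    Quaternion.imJ_sub, Quaternion.imJ_add, Quaternion.imJ_smul,
    Quaternion.imK_sub, Quaternion.imK_add, Quaternion.imK_smul,
    Quaternion.re_star, Quaternion.imI_star, Quaternion.imJ_star, Quaternion.imK_star,
    Quaternion.imI_mul, Quaternion.imJ_mul, Quaternion.imK_mul, smul_eq_mul]
  ring
end

section
/- For quaternions u₁, u₂, u₃, the triple commutator T(u₁,u₂,u₃) = ((u₁ * conj u₂)u₃ - u₃(conj u₂ * u₁))/2 is orthogonal to each of its arguments: ⟪T(u₁,u₂,u₃), u₁⟫ = ⟪T(u₁,u₂,u₃), u₂⟫ = ⟪T(u₁,u₂,u₃), u₃⟫ = 0. -/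
theorem stmt14 (u₁ u₂ u₃ : Quaternion ℝ) :
    qinner (((u₁ * star u₂) * u₃ - u₃ * (star u₂ * u₁)) / 2) u₁ = 0 ∧
    qinner (((u₁ * star u₂) * u₃ - u₃ * (star u₂ * u₁)) / 2) u₂ = 0 ∧
    qinner (((u₁ * star u₂) * u₃ - u₃ * (star u₂ * u₁)) / 2) u₃ = 0 := by
  have h2 : ((2:Quaternion ℝ)⁻¹) = (((2:ℝ)⁻¹ : ℝ) : Quaternion ℝ) := by
    rw [Quaternion.coe_inv]; congr 1
  refine ⟨?_, ?_, ?_⟩ <;>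
  · simp only [qinner, div_eq_mul_inv, h2, Quaternion.re_mul, Quaternion.re_sub,
      Quaternion.imI_sub, Quaternion.imJ_sub, Quaternion.imK_sub, Quaternion.imI_mul,
      Quaternion.imJ_mul, Quaternion.imK_mul, Quaternion.re_star, Quaternion.imI_star,
      Quaternion.imJ_star, Quaternion.imK_star, Quaternion.re_coe, Quaternion.imI_coe,
      Quaternion.imJ_coe, Quaternion.imK_coe]
    ring
end

section
/- For quaternions u₁, u₂, u₃, the squared norm of the triple anticommutator A(u₁,u₂,u₃) = ⟪u₁,u₂⟫•u₃ - ⟪u₁,u₃⟫•u₂ + ⟪u₂,u₃⟫•u₁ equals ⟪u₁,u₁⟫⟪u₂,u₂⟫⟪u₃,u₃⟫ minus the Gram determinant det[[⟪u₁,u₁⟫,⟪u₁,u₂⟫,⟪u₁,u₃⟫],[⟪u₁,u₂⟫,⟪u₂,u₂⟫,⟪u₂,u₃⟫],[⟪u₁,u₃⟫,⟪u₂,u₃⟫,⟪u₃,u₃⟫]]. -/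
lemma qinner_smul_left (a : ℝ) (x y : Quaternion ℝ) : qinner (a • x) y = a * qinner x y := by
  simp [qinner, Quaternion.re_smul]

lemma qinner_smul_right (a : ℝ) (x y : Quaternion ℝ) : qinner x (a • y) = a * qinner x y := by
  simp [qinner, Quaternion.re_smul, Quaternion.re_mul, Quaternion.re_star, Quaternion.imI_star,
    Quaternion.imJ_star, Quaternion.imK_star, Quaternion.imI_smul, Quaternion.imJ_smul,
    Quaternion.imK_smul, smul_eq_mul]

lemma qinner_add_left (x y z : Quaternion ℝ) : qinner (x + y) z = qinner x z + qinner y z := by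
  simp [qinner, add_mul]

lemma qinner_sub_left (x y z : Quaternion ℝ) : qinner (x - y) z = qinner x z - qinner y z := by
  simp [qinner, sub_mul]

lemma qinner_add_right (x y z : Quaternion ℝ) : qinner x (y + z) = qinner x y + qinner x z := by
  simp [qinner, mul_add]

lemma qinner_sub_right (x y z : Quaternion ℝ) : qinner x (y - z) = qinner x y - qinner x z := by
  simp [qinner, mul_sub]

lemma qinner_comm (x y : Quaternion ℝ) : qinner x y = qinner y x := by
  simp [qinner, Quaternion.re_mul, Quaternion.re_star, Quaternion.imI_star, Quaternion.imJ_star,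
    Quaternion.imK_star]
  ring

theorem stmt17 (u₁ u₂ u₃ : Quaternion ℝ) :
    qinner ((qinner u₁ u₂) • u₃ - (qinner u₁ u₃) • u₂ + (qinner u₂ u₃) • u₁)
           ((qinner u₁ u₂) • u₃ - (qinner u₁ u₃) • u₂ + (qinner u₂ u₃) • u₁) =
      qinner u₁ u₁ * qinner u₂ u₂ * qinner u₃ u₃ -
        Matrix.det !![qinner u₁ u₁, qinner u₁ u₂, qinner u₁ u₃;
                      qinner u₁ u₂, qinner u₂ u₂, qinner u₂ u₃;
                      qinner u₁ u₃, qinner u₂ u₃, qinner u₃ u₃] := by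
  simp only [Matrix.det_fin_three, Matrix.cons_val', Matrix.cons_val_zero, Matrix.cons_val_one,
    Matrix.head_cons, Matrix.empty_val', Matrix.cons_val_fin_one, Matrix.head_fin_const,
    Matrix.cons_val_two, Matrix.tail_cons, Matrix.of_apply]
  rw [sub_add_eq_add_sub]
  simp only [qinner_add_left, qinner_sub_left, qinner_add_right, qinner_sub_right,
    qinner_smul_left, qinner_smul_right]
  rw [qinner_comm u₂ u₁, qinner_comm u₃ u₁, qinner_comm u₃ u₂]
  ring
end
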